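/- (Special case, two-action reduction.) Suppose all devices are type-II, i.e., 𝒩₁ = ∅. Fix a channel state h and let u† be the indicator action of a set S ⊆ 𝒩 with |S| = M satisfying β_i·(C^s_i + C^u_i(h_i)) ≤ β_j·(C^s_j + C^u_j(h_j)) for all i ∈ S and j ∈ 𝒩∖S. Then for every real-valued function V on states and every Δ ∈ {1,…,Δ̂}, the minimum of J_V(Δ,h,u) over all feasible actions u equals min{ J_V(Δ,h,0), J_V(Δ,h,u†) }, where 0 denotes the all-zero (idle) action. In particular the Bellman minimization over the action set of size 1 + C(|𝒩|,M) reduces to a minimization over two actions. -/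

import Mathlib

open Finset

/-- Validity of a device-age vector: ages in `{1,…,Âₙ}` for type-I devices (those in `N1`),
and age `0` for type-II devices. -/
def validAge {N : Type*} (N1 : Finset N) (Ahat : N → ℕ) (A : N → ℕ) : Prop :=
  (∀ n ∈ N1, 1 ≤ A n ∧ A n ≤ Ahat n) ∧ ∀ n ∉ N1, A n = 0

/-- Destination-age update `D(A,Δ,u)`: if `u` is a full schedule (`|u| = M`), the new age is
`min(maxₙ uₙ·Aₙ + 1, Δ̂)`; otherwise it is `min(Δ+1, Δ̂)`. Actions are encoded as the
finset of scheduled devices. -/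
def destUpdate {N : Type*} (M Δhat : ℕ) (A : N → ℕ) (Δ : ℕ) (u : Finset N) : ℕ :=
  if u.card = M then min (u.sup A + 1) Δhat else min (Δ + 1) Δhat

/-- Next device-age vector given that the set `S ⊆ N1` of type-I devices receives
fresh status packets. -/
def nextAge {N : Type*} [DecidableEq N] (N1 : Finset N) (Ahat : N → ℕ)
    (S : Finset N) (A : N → ℕ) : N → ℕ :=
  fun n => if n ∈ N1 then (if n ∈ S then 1 else min (A n + 1) (Ahat n)) else 0

/-- Probability that exactly the devices in `S` receive arrivals. -/
noncomputable def arrWeight {N : Type*} [DecidableEq N] (N1 : Finset N) (lam : N → ℝ)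
    (S : Finset N) : ℝ :=
  (∏ n ∈ S, lam n) * ∏ n ∈ N1 \ S, (1 - lam n)

/-- Probability of the next channel state vector `h` under independent components. -/
noncomputable def chanWeight {N : Type*} [Fintype N] {H : N → Type*}
    (q : ∀ n, H n → ℝ) (h : ∀ n, H n) : ℝ := ∏ n, q n (h n)

/-- One-step energy cost `c(u,h) = Σₙ βₙ uₙ (Cˢₙ + Cᵘₙ(hₙ))`. -/
noncomputable def energyCost {N : Type*} {H : N → Type*} (β Cs : N → ℝ)
    (Cu : ∀ n, H n → ℝ) (u : Finset N) (h : ∀ n, H n) : ℝ :=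
  ∑ n ∈ u, β n * (Cs n + Cu n (h n))

/-- Q-function `J_V(A,Δ,h,u) = Δ + c(u,h) + E[V(A', D(A,Δ,u), h')]`. -/
noncomputable def Qfun {N : Type*} [Fintype N] [DecidableEq N] {H : N → Type*}
    [∀ n, Fintype (H n)] (N1 : Finset N) (M Δhat : ℕ) (Ahat : N → ℕ) (lam : N → ℝ)
    (q : ∀ n, H n → ℝ) (β Cs : N → ℝ) (Cu : ∀ n, H n → ℝ)
    (V : (N → ℕ) → ℕ → (∀ n, H n) → ℝ)
    (A : N → ℕ) (Δ : ℕ) (h : ∀ n, H n) (u : Finset N) : ℝ :=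
  (Δ : ℝ) + energyCost β Cs Cu u h +
    ∑ S ∈ N1.powerset, arrWeight N1 lam S *
      ∑ h' : ∀ n, H n, chanWeight q h' *
        V (nextAge N1 Ahat S A) (destUpdate M Δhat A Δ u) h'

/-- Bellman operator: `(T V)(A,Δ,h) = min over feasible u of J_V(A,Δ,h,u)`. -/
noncomputable def bellman {N : Type*} [Fintype N] [DecidableEq N] {H : N → Type*}
    [∀ n, Fintype (H n)] (N1 : Finset N) (M Δhat : ℕ) (Ahat : N → ℕ) (lam : N → ℝ)
    (q : ∀ n, H n → ℝ) (β Cs : N → ℝ) (Cu : ∀ n, H n → ℝ)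
    (V : (N → ℕ) → ℕ → (∀ n, H n) → ℝ) :
    (N → ℕ) → ℕ → (∀ n, H n) → ℝ :=
  fun A Δ h =>
    (Finset.univ.filter (fun u : Finset N => u.card ≤ M)).inf'
      ⟨∅, by simp⟩ (Qfun N1 M Δhat Ahat lam q β Cs Cu V A Δ h)

/-- `u` is optimal at state `(A,Δ,h)` under `V`. -/
def isOptimal {N : Type*} [Fintype N] [DecidableEq N] {H : N → Type*}
    [∀ n, Fintype (H n)] (N1 : Finset N) (M Δhat : ℕ) (Ahat : N → ℕ) (lam : N → ℝ)
    (q : ∀ n, H n → ℝ) (β Cs : N → ℝ) (Cu : ∀ n, H n → ℝ)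
    (V : (N → ℕ) → ℕ → (∀ n, H n) → ℝ)
    (A : N → ℕ) (Δ : ℕ) (h : ∀ n, H n) (u : Finset N) : Prop :=
  ∀ v : Finset N, v.card ≤ M →
    Qfun N1 M Δhat Ahat lam q β Cs Cu V A Δ h u ≤
    Qfun N1 M Δhat Ahat lam q β Cs Cu V A Δ h v

/-- Special case with only type-II devices (`N1 = ∅`): two-action reduction.  If `u†` is the
indicator action of a set `S` of `M` devices with the smallest weighted energy costs, then
the Bellman minimum over all feasible actions equals the minimum over just the idle action
`∅` and `u†`. -/
theorem stmt14 {N : Type*} [Fintype N] [DecidableEq N] {H : N → Type*}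
    [∀ n, Fintype (H n)] [∀ n, LinearOrder (H n)]
    (M Δhat : ℕ) (Ahat : N → ℕ) (lam : N → ℝ)
    (q : ∀ n, H n → ℝ) (β Cs : N → ℝ) (Cu : ∀ n, H n → ℝ)
    (hM1 : 1 ≤ M) (hM2 : M ≤ Fintype.card N) (hΔhat : 1 ≤ Δhat)
    (hq0 : ∀ n (x : H n), 0 ≤ q n x) (hq1 : ∀ n, ∑ x : H n, q n x = 1)
    (hCu0 : ∀ n (x : H n), 0 ≤ Cu n x) (hCuA : ∀ n, Antitone (Cu n))
    (hCs0 : ∀ n, 0 ≤ Cs n) (hβ : ∀ n, 0 < β n)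
    (h : ∀ n, H n)
    (S : Finset N) (hS : S.card = M)
    (hcheap : ∀ i ∈ S, ∀ j ∉ S,
      β i * (Cs i + Cu i (h i)) ≤ β j * (Cs j + Cu j (h j)))
    (V : (N → ℕ) → ℕ → (∀ n, H n) → ℝ)
    (Δ : ℕ) (h1 : 1 ≤ Δ) (h2 : Δ ≤ Δhat) :
    bellman (∅ : Finset N) M Δhat Ahat lam q β Cs Cu V (fun _ => 0) Δ h =
      min (Qfun (∅ : Finset N) M Δhat Ahat lam q β Cs Cu V (fun _ => 0) Δ h ∅)
        (Qfun (∅ : Finset N) M Δhat Ahat lam q β Cs Cu V (fun _ => 0) Δ h S) := by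
  classical
  set w : N → ℝ := fun n => β n * (Cs n + Cu n (h n)) with hw
  have hw0 : ∀ n, 0 ≤ w n := fun n =>
    mul_nonneg (hβ n).le (add_nonneg (hCs0 n) (hCu0 n (h n)))
  have hsum : ∀ u : Finset N, u.card = M → ∑ n ∈ S, w n ≤ ∑ n ∈ u, w n := by
    intro u hu
    have hcards : (S \ u).card = (u \ S).card :=
      Finset.card_sdiff_comm (hS.trans hu.symm)
    have hdiff : ∑ n ∈ S \ u, w n ≤ ∑ n ∈ u \ S, w n := by
      have e : (S \ u : Finset N) ≃ (u \ S : Finset N) :=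
        Finset.equivOfCardEq hcards
      calc ∑ n ∈ S \ u, w n = ∑ i : (S \ u : Finset N), w i :=
            (Finset.sum_coe_sort _ _).symm
        _ ≤ ∑ i : (S \ u : Finset N), w (e i) := by
            apply Finset.sum_le_sum
            intro i _
            have hiS : (i : N) ∈ S := (Finset.mem_sdiff.mp i.2).1
            have hjS : ((e i : N)) ∉ S := (Finset.mem_sdiff.mp (e i).2).2
            exact hcheap i hiS (e i) hjS
        _ = ∑ j : (u \ S : Finset N), w j := Equiv.sum_comp e (fun j => w j)
        _ = ∑ n ∈ u \ S, w n := Finset.sum_coe_sort _ _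
    have h1 : ∑ n ∈ S ∩ u, w n + ∑ n ∈ S \ u, w n = ∑ n ∈ S, w n :=
      Finset.sum_inter_add_sum_sdiff S u w
    have h2 : ∑ n ∈ u ∩ S, w n + ∑ n ∈ u \ S, w n = ∑ n ∈ u, w n :=
      Finset.sum_inter_add_sum_sdiff u S w
    have h3 : S ∩ u = u ∩ S := Finset.inter_comm S u
    rw [← h1, ← h2, h3]
    linarith
  have key : ∀ u : Finset N, u.card ≤ M →
      Qfun (∅ : Finset N) M Δhat Ahat lam q β Cs Cu V (fun _ => 0) Δ h ∅ ≤
        Qfun (∅ : Finset N) M Δhat Ahat lam q β Cs Cu V (fun _ => 0) Δ h u ∨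
      Qfun (∅ : Finset N) M Δhat Ahat lam q β Cs Cu V (fun _ => 0) Δ h S ≤
        Qfun (∅ : Finset N) M Δhat Ahat lam q β Cs Cu V (fun _ => 0) Δ h u := by
    intro u hu
    by_cases hcard : u.card = M
    · right
      have hdest : destUpdate M Δhat (fun _ => 0) Δ u
          = destUpdate M Δhat (fun _ => 0) Δ S := by
        have hsup : ∀ v : Finset N, v.sup (fun _ => (0:ℕ)) = 0 :=
          fun v => Nat.le_zero.mp (Finset.sup_le fun _ _ => le_rfl)
        simp [destUpdate, hcard, hS, hsup]
      simp only [Qfun, hdest]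
      have hE : energyCost β Cs Cu S h ≤ energyCost β Cs Cu u h := hsum u hcard
      linarith
    · left
      have hdest : destUpdate M Δhat (fun _ => 0) Δ u
          = destUpdate M Δhat (fun _ => 0) Δ (∅ : Finset N) := by
        simp only [destUpdate, Finset.card_empty, if_neg hcard,
          if_neg (show (0:ℕ) ≠ M by omega), (show (0:ℕ) ≠ M by omega), ↓reduceIte]
      simp only [Qfun, hdest]
      have hE : energyCost β Cs Cu (∅ : Finset N) h ≤ energyCost β Cs Cu u h := by
        simp only [energyCost, Finset.sum_empty]
        exact Finset.sum_nonneg fun n _ => hw0 n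
      linarith
  unfold bellman
  apply le_antisymm
  · apply le_min
    · exact Finset.inf'_le _ (by simp)
    · exact Finset.inf'_le _ (by simp [hS])
  · apply Finset.le_inf'
    intro u hu
    simp only [Finset.mem_filter, Finset.mem_univ, true_and] at hu
    rcases key u hu with h' | h'
    · exact le_trans (min_le_left _ _) h'
    · exact le_trans (min_le_right _ _) h'
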